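/- For 0 < x < π and 0 < t < 1, set Î(x,t) = log( sin(x(1−t)/2)·sin(x(1+t)/2) / sin(xt/2)² ). Then: (1) for each fixed x ∈ (0, π), the function t ↦ Î(x,t) is continuous and strictly decreasing on (0,1), with Î(x,t) → +∞ as t → 0⁺ and Î(x,t) → −∞ as t → 1⁻; (2) consequently, for each x ∈ (0,π) there is a unique r_x ∈ (0,1) with Î(x, r_x) = 0; (3) the map x ↦ r_x is decreasing on (0, π); and (4) 1/2 < r_x < 1/√2 for all x ∈ (0, π). -/

import Mathlib

open Set Filter

/-- `Î(x,t) = log( sin(x(1−t)/2)·sin(x(1+t)/2) / sin(xt/2)² )`. -/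
noncomputable def Ihat (x t : ℝ) : ℝ :=
  Real.log (Real.sin (x * (1 - t) / 2) * Real.sin (x * (1 + t) / 2) / Real.sin (x * t / 2) ^ 2)

lemma sin_sub_mul_sin_add (a b : ℝ) :
    Real.sin (a - b) * Real.sin (a + b) = Real.sin a ^ 2 - Real.sin b ^ 2 := by
  have ha := Real.sin_sq_add_cos_sq a
  have hb := Real.sin_sq_add_cos_sq b
  rw [Real.sin_sub, Real.sin_add]; nlinarith

lemma Ihat_eq (x t : ℝ) :
    Ihat x t = Real.log ((Real.sin (x/2) ^ 2 - Real.sin (x*t/2) ^ 2) / Real.sin (x*t/2) ^ 2) := by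
  unfold Ihat
  rw [show x * (1 - t) / 2 = x/2 - x*t/2 by ring, show x * (1 + t) / 2 = x/2 + x*t/2 by ring,
    sin_sub_mul_sin_add]

lemma sin_lt_sin' {a b : ℝ} (ha : 0 ≤ a) (hab : a < b) (hb : b ≤ Real.pi/2) :
    Real.sin a < Real.sin b :=
  Real.strictMonoOn_sin ⟨by linarith [Real.pi_pos], by linarith⟩
    ⟨by linarith [Real.pi_pos], hb⟩ hab

lemma sq_lt_sq_of_pos {a b : ℝ} (ha : 0 < a) (hab : a < b) : a^2 < b^2 := by nlinarith

lemma tan_mul_lt {r y : ℝ} (hr0 : 0 < r) (hr1 : r < 1) (hy0 : 0 < y) (hy : y < Real.pi/2) :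
    Real.tan (r*y) < r * Real.tan y := by
  have key : StrictMonoOn (fun s => r * Real.tan s - Real.tan (r*s)) (Icc 0 y) := by
    apply strictMonoOn_of_deriv_pos (convex_Icc 0 y)
    · apply ContinuousOn.sub
      · exact continuousOn_const.mul (Real.continuousOn_tan.mono (fun s hs => by
          have : Real.cos s > 0 := Real.cos_pos_of_mem_Ioo ⟨by cases hs; linarith [Real.pi_pos], by cases hs; linarith⟩
          exact this.ne'))
      · apply ContinuousOn.comp (Real.continuousOn_tan) (continuousOn_const.mul continuousOn_id)
        intro s hs
        have : Real.cos (r*s) > 0 := Real.cos_pos_of_mem_Ioo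
          ⟨by cases hs; nlinarith [Real.pi_pos], by cases hs; nlinarith [Real.pi_pos]⟩
        exact this.ne'
    · intro s hs
      rw [interior_Icc] at hs
      obtain ⟨hs0, hsy⟩ := hs
      have hcs : 0 < Real.cos s := Real.cos_pos_of_mem_Ioo ⟨by linarith [Real.pi_pos], by linarith⟩
      have hcrs : 0 < Real.cos (r*s) := Real.cos_pos_of_mem_Ioo
        ⟨by nlinarith [Real.pi_pos], by nlinarith⟩
      have h1 : HasDerivAt (fun s => r * Real.tan s - Real.tan (r*s))
          (r * (1 / Real.cos s ^ 2) - 1 / Real.cos (r*s) ^ 2 * r) s := by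
        apply HasDerivAt.sub
        · exact (Real.hasDerivAt_tan hcs.ne').const_mul r
        · have hinner : HasDerivAt (fun s : ℝ => r * s) r s := by
            simpa using (hasDerivAt_id s).const_mul r
          exact (Real.hasDerivAt_tan hcrs.ne').comp s hinner
      rw [h1.deriv]
      have hlt : Real.cos s < Real.cos (r*s) := by
        apply Real.strictAntiOn_cos ⟨by nlinarith, by nlinarith [Real.pi_pos]⟩
          ⟨by linarith, by linarith [Real.pi_pos]⟩ (by nlinarith)
      have h2 : Real.cos s ^ 2 < Real.cos (r*s) ^ 2 := by nlinarith
      have : 1 / Real.cos (r*s) ^ 2 < 1 / Real.cos s ^ 2 := by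
        apply one_div_lt_one_div_of_lt (by positivity) h2
      nlinarith
  have h0 : (0:ℝ) ∈ Icc 0 y := ⟨le_rfl, hy0.le⟩
  have hyy : y ∈ Icc 0 y := ⟨hy0.le, le_rfl⟩
  have := key h0 hyy hy0
  simp only [mul_zero, Real.tan_zero, sub_zero] at this
  linarith

lemma ratio_mono {r y₁ y₂ : ℝ} (hr0 : 0 < r) (hr1 : r < 1) (h1 : 0 < y₁) (h12 : y₁ ≤ y₂)
    (h2 : y₂ < Real.pi/2) :
    Real.sin (r*y₁) * Real.sin y₂ ≤ Real.sin (r*y₂) * Real.sin y₁ := by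
  rcases eq_or_lt_of_le h12 with rfl | h12
  · ring_nf; exact le_rfl
  have key : StrictMonoOn (fun y => Real.sin (r*y) / Real.sin y) (Icc y₁ y₂) := by
    apply strictMonoOn_of_deriv_pos (convex_Icc y₁ y₂)
    · apply ContinuousOn.div
      · exact (Real.continuous_sin.comp (continuous_const.mul continuous_id)).continuousOn
      · exact Real.continuous_sin.continuousOn
      · intro y hy
        have : 0 < Real.sin y := Real.sin_pos_of_pos_of_lt_pi (by cases hy; linarith)
          (by cases hy; linarith [Real.pi_pos])
        exact this.ne'
    · intro y hy
      rw [interior_Icc] at hy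
      obtain ⟨hy1, hy2⟩ := hy
      have hy0 : 0 < y := lt_trans h1 hy1
      have hyp : y < Real.pi/2 := lt_trans hy2 h2
      have hsy : 0 < Real.sin y := Real.sin_pos_of_pos_of_lt_pi hy0 (by linarith [Real.pi_pos])
      have hcy : 0 < Real.cos y := Real.cos_pos_of_mem_Ioo ⟨by linarith [Real.pi_pos], hyp⟩
      have hcry : 0 < Real.cos (r*y) := Real.cos_pos_of_mem_Ioo
        ⟨by nlinarith [Real.pi_pos], by nlinarith⟩
      have hd : HasDerivAt (fun y => Real.sin (r*y) / Real.sin y)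
          ((Real.cos (r*y) * r * Real.sin y - Real.sin (r*y) * Real.cos y) / Real.sin y ^ 2) y := by
        apply HasDerivAt.div
        · have hinner : HasDerivAt (fun y : ℝ => r * y) r y := by
            simpa using (hasDerivAt_id y).const_mul r
          exact (Real.hasDerivAt_sin (r*y)).comp y hinner
        · exact Real.hasDerivAt_sin y
        · exact hsy.ne'
      rw [hd.deriv]
      have htan := tan_mul_lt hr0 hr1 hy0 hyp
      rw [Real.tan_eq_sin_div_cos, Real.tan_eq_sin_div_cos] at htan
      have hnum : Real.sin (r*y) * Real.cos y < Real.cos (r*y) * r * Real.sin y := by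
        rw [← mul_div_assoc, div_lt_div_iff₀ hcry hcy] at htan
        nlinarith
      exact div_pos (by linarith) (pow_pos hsy 2)
  have hs1 : 0 < Real.sin y₁ := Real.sin_pos_of_pos_of_lt_pi h1 (by linarith [Real.pi_pos])
  have hs2 : 0 < Real.sin y₂ := Real.sin_pos_of_pos_of_lt_pi (by linarith) (by linarith [Real.pi_pos])
  have := key ⟨le_rfl, h12.le⟩ ⟨h12.le, le_rfl⟩ h12
  rw [div_lt_div_iff₀ hs1 hs2] at this
  linarith

lemma sin_star {c u : ℝ} (hc0 : 0 < c) (hc1 : c < 1) (hu0 : 0 < u) (hu : u ≤ Real.pi) :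
    c * Real.sin u < Real.sin (c * u) := by
  have h := strictConcaveOn_sin_Icc.2 (show (0:ℝ) ∈ Icc 0 Real.pi from ⟨le_rfl, Real.pi_pos.le⟩)
    (show u ∈ Icc 0 Real.pi from ⟨hu0.le, hu⟩) hu0.ne
    (show (0:ℝ) < 1 - c by linarith) hc0 (by ring)
  simp only [smul_eq_mul, mul_zero, Real.sin_zero, zero_add, add_zero] at h
  linarith

lemma root_iff {x r : ℝ} (hx : x ∈ Ioo 0 Real.pi) (hr : r ∈ Ioo (0:ℝ) 1) :
    Ihat x r = 0 ↔ 2 * Real.sin (x*r/2) ^ 2 = Real.sin (x/2) ^ 2 := by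
  obtain ⟨hx0, hxpi⟩ := hx
  obtain ⟨hr0, hr1⟩ := hr
  have hs : 0 < Real.sin (x*r/2) := Real.sin_pos_of_pos_of_lt_pi (by positivity) (by nlinarith [Real.pi_pos])
  have hss : Real.sin (x*r/2) < Real.sin (x/2) := sin_lt_sin' (by positivity) (by nlinarith) (by linarith)
  have hnum : 0 < Real.sin (x/2) ^ 2 - Real.sin (x*r/2) ^ 2 := by nlinarith
  have hden : 0 < Real.sin (x*r/2) ^ 2 := by positivity
  rw [Ihat_eq]
  constructor
  · intro h
    rcases Real.log_eq_zero.mp h with h' | h' | h'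
    · exact absurd h' (div_pos hnum hden).ne'
    · field_simp at h'; linarith
    · nlinarith [div_pos hnum hden]
  · intro h
    have : (Real.sin (x/2) ^ 2 - Real.sin (x*r/2) ^ 2) / Real.sin (x*r/2) ^ 2 = 1 := by
      field_simp; linarith
    rw [this, Real.log_one]

lemma root_sqrt {x r : ℝ} (hx : x ∈ Ioo 0 Real.pi) (hr : r ∈ Ioo (0:ℝ) 1) (h : Ihat x r = 0) :
    Real.sqrt 2 * Real.sin (x*r/2) = Real.sin (x/2) := by
  have h2 := (root_iff hx hr).mp h
  have hs : 0 ≤ Real.sin (x*r/2) := by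
    apply (Real.sin_pos_of_pos_of_lt_pi (by obtain ⟨a,b⟩ := hx; obtain ⟨c,d⟩ := hr; positivity)
      (by obtain ⟨a,b⟩ := hx; obtain ⟨c,d⟩ := hr; nlinarith [Real.pi_pos])).le
  have hS : 0 ≤ Real.sin (x/2) := by
    apply (Real.sin_pos_of_pos_of_lt_pi (by obtain ⟨a,b⟩ := hx; linarith)
      (by obtain ⟨a,b⟩ := hx; linarith [Real.pi_pos])).le
  have hsq : (Real.sqrt 2 * Real.sin (x*r/2)) ^ 2 = Real.sin (x/2) ^ 2 := by
    rw [mul_pow, Real.sq_sqrt (by norm_num : (2:ℝ) ≥ 0)]; linarith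
  calc Real.sqrt 2 * Real.sin (x*r/2)
      = Real.sqrt ((Real.sqrt 2 * Real.sin (x*r/2)) ^ 2) := (Real.sqrt_sq (by positivity)).symm
    _ = Real.sqrt (Real.sin (x/2) ^ 2) := by rw [hsq]
    _ = Real.sin (x/2) := Real.sqrt_sq hS

lemma Ihat_fun (x : ℝ) : Ihat x = fun t =>
    Real.log ((Real.sin (x/2) ^ 2 - Real.sin (x*t/2) ^ 2) / Real.sin (x*t/2) ^ 2) :=
  funext (Ihat_eq x)

lemma sin_xt_pos {x t : ℝ} (hx : x ∈ Ioo 0 Real.pi) (ht : t ∈ Ioo (0:ℝ) 1) :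
    0 < Real.sin (x*t/2) ∧ Real.sin (x*t/2) < Real.sin (x/2) := by
  obtain ⟨hx0, hxpi⟩ := hx; obtain ⟨ht0, ht1⟩ := ht
  constructor
  · exact Real.sin_pos_of_pos_of_lt_pi (by positivity) (by nlinarith [Real.pi_pos])
  · exact sin_lt_sin' (by positivity) (by nlinarith) (by linarith)

lemma Ihat_anti {x : ℝ} (hx : x ∈ Ioo 0 Real.pi) : StrictAntiOn (Ihat x) (Ioo 0 1) := by
  intro t₁ ht₁ t₂ ht₂ h12
  obtain ⟨hs₁, hs₁S⟩ := sin_xt_pos hx ht₁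
  obtain ⟨hs₂, hs₂S⟩ := sin_xt_pos hx ht₂
  obtain ⟨hx0, hxpi⟩ := hx
  obtain ⟨ht10, ht11⟩ := ht₁
  obtain ⟨ht20, ht21⟩ := ht₂
  have h12' : Real.sin (x*t₁/2) < Real.sin (x*t₂/2) :=
    sin_lt_sin' (by positivity) (by nlinarith) (by nlinarith)
  have hS : 0 < Real.sin (x/2) := lt_trans hs₁ hs₁S
  rw [Ihat_eq, Ihat_eq]
  apply Real.log_lt_log
  · exact div_pos (by nlinarith [sq_lt_sq_of_pos hs₂ hs₂S]) (pow_pos hs₂ 2)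
  · rw [div_lt_div_iff₀ (pow_pos hs₂ 2) (pow_pos hs₁ 2)]
    nlinarith [sq_lt_sq_of_pos hs₁ h12', mul_pos (pow_pos hS 2) (pow_pos hs₁ 2),
      mul_lt_mul_of_pos_left (sq_lt_sq_of_pos hs₁ h12') (pow_pos hS 2)]

lemma Ihat_cont {x : ℝ} (hx : x ∈ Ioo 0 Real.pi) : ContinuousOn (Ihat x) (Ioo 0 1) := by
  rw [Ihat_fun]
  apply ContinuousOn.log
  · apply ContinuousOn.div
    · apply ContinuousOn.sub continuousOn_const
      exact ((Real.continuous_sin.comp (by continuity)).pow 2).continuousOn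
    · exact ((Real.continuous_sin.comp (by continuity)).pow 2).continuousOn
    · intro t ht; have := (sin_xt_pos hx ht).1; positivity
  · intro t ht
    obtain ⟨hs, hsS⟩ := sin_xt_pos hx ht
    exact (div_pos (by nlinarith [sq_lt_sq_of_pos hs hsS]) (pow_pos hs 2)).ne'

lemma Ihat_tendsto_zero {x : ℝ} (hx : x ∈ Ioo 0 Real.pi) :
    Tendsto (Ihat x) (nhdsWithin 0 (Ioi 0)) atTop := by
  rw [Ihat_fun]
  apply Real.tendsto_log_atTop.comp
  simp only [div_eq_mul_inv]
  have h0 : 0 < Real.sin (x/2) :=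
    Real.sin_pos_of_pos_of_lt_pi (by obtain ⟨a,b⟩ := hx; linarith)
      (by obtain ⟨a,b⟩ := hx; linarith [Real.pi_pos])
  apply Filter.Tendsto.pos_mul_atTop (pow_pos h0 2)
  · have hc : Continuous fun t : ℝ => Real.sin (x/2) ^ 2 - Real.sin (x*t/2) ^ 2 := by continuity
    have := (hc.tendsto 0).mono_left (nhdsWithin_le_nhds (s := Ioi (0:ℝ)))
    simpa [div_eq_mul_inv] using this
  · apply Filter.Tendsto.inv_tendsto_nhdsGT_zero
    apply tendsto_nhdsWithin_of_tendsto_nhds_of_eventually_within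
    · have hc : Continuous fun t : ℝ => Real.sin (x*t/2) ^ 2 := by continuity
      have := (hc.tendsto 0).mono_left (nhdsWithin_le_nhds (s := Ioi (0:ℝ)))
      simpa [div_eq_mul_inv] using this
    · filter_upwards [Ioo_mem_nhdsGT_of_mem (show (0:ℝ) ∈ Ico 0 1 by constructor <;> norm_num)]
        with t ht
      exact mem_Ioi.mpr (pow_pos (sin_xt_pos hx ht).1 2)

lemma Ihat_tendsto_one {x : ℝ} (hx : x ∈ Ioo 0 Real.pi) :
    Tendsto (Ihat x) (nhdsWithin 1 (Iio 1)) atBot := by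
  rw [Ihat_fun]
  apply Real.tendsto_log_nhdsGT_zero.comp
  apply tendsto_nhdsWithin_of_tendsto_nhds_of_eventually_within
  · have hS : 0 < Real.sin (x/2) :=
      Real.sin_pos_of_pos_of_lt_pi (by obtain ⟨a,b⟩ := hx; linarith)
        (by obtain ⟨a,b⟩ := hx; linarith [Real.pi_pos])
    have hc : ContinuousAt (fun t : ℝ =>
        (Real.sin (x/2) ^ 2 - Real.sin (x*t/2) ^ 2) / Real.sin (x*t/2) ^ 2) 1 := by
      apply ContinuousAt.div
      · exact (continuous_const.sub ((Real.continuous_sin.comp (by continuity)).pow 2)).continuousAt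
      · exact ((Real.continuous_sin.comp (by continuity)).pow 2).continuousAt
      · simp only [mul_one]; exact pow_ne_zero 2 hS.ne'
    have := hc.tendsto.mono_left (nhdsWithin_le_nhds (s := Iio (1:ℝ)))
    simpa using this
  · filter_upwards [Ioo_mem_nhdsLT_of_mem (show (1:ℝ) ∈ Ioc 0 1 by constructor <;> norm_num)]
      with t ht
    obtain ⟨hs, hsS⟩ := sin_xt_pos hx ht
    exact div_pos (by nlinarith [sq_lt_sq_of_pos hs hsS]) (pow_pos hs 2)

lemma Ihat_exu {x : ℝ} (hx : x ∈ Ioo 0 Real.pi) : ∃! r, r ∈ Ioo (0:ℝ) 1 ∧ Ihat x r = 0 := by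
  obtain ⟨hx0, hxpi⟩ := hx
  have hS : 0 < Real.sin (x/2) :=
    Real.sin_pos_of_pos_of_lt_pi (by linarith) (by linarith [Real.pi_pos])
  have h2sq : Real.sqrt 2 ^ 2 = 2 := Real.sq_sqrt (by norm_num)
  have h21 : 1 < Real.sqrt 2 := by nlinarith [Real.sqrt_nonneg 2]
  set v := Real.sin (x/2) / Real.sqrt 2 with hv
  have hv0 : 0 < v := by positivity
  have hvS : v < Real.sin (x/2) := by
    rw [hv, div_lt_iff₀ (by linarith)]; nlinarith
  have hS1 : Real.sin (x/2) ≤ 1 := Real.sin_le_one _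
  have ha0 : 0 < Real.arcsin v := Real.arcsin_pos.mpr hv0
  have hax : Real.arcsin v < x/2 := by
    have := Real.strictMonoOn_arcsin (show v ∈ Icc (-1:ℝ) 1 by constructor <;> linarith)
      (show Real.sin (x/2) ∈ Icc (-1:ℝ) 1 by constructor <;> linarith) hvS
    rwa [Real.arcsin_sin (by linarith [Real.pi_pos]) (by linarith)] at this
  set r := 2 * Real.arcsin v / x with hr
  have hrmem : r ∈ Ioo (0:ℝ) 1 := by
    constructor
    · rw [hr]; positivity
    · rw [hr, div_lt_one hx0]; linarith
  have hxr : x * r / 2 = Real.arcsin v := by rw [hr]; field_simp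
  have hroot : Ihat x r = 0 := by
    rw [root_iff ⟨hx0, hxpi⟩ hrmem, hxr, Real.sin_arcsin (by linarith) (by linarith)]
    rw [hv, div_pow, h2sq]; ring
  refine ⟨r, ⟨hrmem, hroot⟩, ?_⟩
  rintro r' ⟨hr'mem, hroot'⟩
  exact (Ihat_anti ⟨hx0, hxpi⟩).injOn hr'mem hrmem (by rw [hroot', hroot])

lemma Ihat_root_mono {x₁ x₂ : ℝ} (hx₁ : x₁ ∈ Ioo 0 Real.pi) (hx₂ : x₂ ∈ Ioo 0 Real.pi)
    (hx12 : x₁ ≤ x₂) {r₁ r₂ : ℝ} (hr₁ : r₁ ∈ Ioo (0:ℝ) 1) (hr₂ : r₂ ∈ Ioo (0:ℝ) 1)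
    (h1 : Ihat x₁ r₁ = 0) (h2 : Ihat x₂ r₂ = 0) : r₂ ≤ r₁ := by
  by_contra hcon
  push_neg at hcon
  have e₁ := root_sqrt hx₁ hr₁ h1
  have e₂ := root_sqrt hx₂ hr₂ h2
  rw [show x₁*r₁/2 = r₁*(x₁/2) by ring] at e₁
  rw [show x₂*r₂/2 = r₂*(x₂/2) by ring] at e₂
  obtain ⟨hx10, hx1pi⟩ := hx₁; obtain ⟨hx20, hx2pi⟩ := hx₂
  obtain ⟨hr10, hr11⟩ := hr₁; obtain ⟨hr20, hr21⟩ := hr₂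
  have hy1 : 0 < x₁/2 := by linarith
  have hy2 : x₂/2 < Real.pi/2 := by linarith
  have hmono := ratio_mono hr10 hr11 hy1 (by linarith) hy2
  have hlt : Real.sin (r₁*(x₂/2)) < Real.sin (r₂*(x₂/2)) :=
    sin_lt_sin' (by positivity) (by nlinarith) (by nlinarith)
  have hs1 : 0 < Real.sin (x₁/2) :=
    Real.sin_pos_of_pos_of_lt_pi hy1 (by linarith [Real.pi_pos])
  have hs2 : 0 < Real.sin (x₂/2) :=
    Real.sin_pos_of_pos_of_lt_pi (by linarith) (by linarith [Real.pi_pos])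
  have h2pos : (0:ℝ) < Real.sqrt 2 := Real.sqrt_pos.mpr (by norm_num)
  -- √2 * (sin(r₁y₁) * sin y₂) ≤ √2 * (sin(r₁y₂) * sin y₁)
  have c1 := mul_le_mul_of_nonneg_left hmono h2pos.le
  -- √2 * sin(r₁y₂) * sin y₁ < √2 * sin(r₂y₂) * sin y₁
  have c2 := mul_lt_mul_of_pos_right (mul_lt_mul_of_pos_left hlt h2pos) hs1
  nlinarith [c1, c2, e₁, e₂, hs1, hs2]

lemma Ihat_root_bounds {x : ℝ} (hx : x ∈ Ioo 0 Real.pi) {r : ℝ} (hr : r ∈ Ioo (0:ℝ) 1)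
    (h : Ihat x r = 0) : 1/2 < r ∧ r < 1 / Real.sqrt 2 := by
  have e := root_sqrt hx hr h
  obtain ⟨hx0, hxpi⟩ := hx
  obtain ⟨hr0, hr1⟩ := hr
  have h2sq : Real.sqrt 2 ^ 2 = 2 := Real.sq_sqrt (by norm_num)
  have h21 : 1 < Real.sqrt 2 := by nlinarith [Real.sqrt_nonneg 2]
  have hpi := Real.pi_pos
  have hs4 : 0 < Real.sin (x/4) := Real.sin_pos_of_pos_of_lt_pi (by linarith) (by linarith)
  have hsr : 0 < Real.sin (x*r/2) :=
    Real.sin_pos_of_pos_of_lt_pi (by positivity) (by nlinarith)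
  constructor
  · -- lower bound
    have hq : Real.sin (x/2) = 2 * Real.sin (x/4) * Real.cos (x/4) := by
      rw [show x/2 = 2*(x/4) by ring, Real.sin_two_mul]
    have hc : Real.sqrt 2 / 2 < Real.cos (x/4) := by
      have := Real.strictAntiOn_cos (show x/4 ∈ Icc 0 Real.pi by constructor <;> linarith)
        (show Real.pi/4 ∈ Icc 0 Real.pi by constructor <;> linarith) (by linarith)
      rwa [Real.cos_pi_div_four] at this
    have hsin : Real.sin (x/4) < Real.sin (x*r/2) := by
      nlinarith [mul_lt_mul_of_pos_left hc (show (0:ℝ) < 2 * Real.sin (x/4) by positivity)]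
    have harg : x/4 < x*r/2 := by
      have := (Real.strictMonoOn_sin.lt_iff_lt
        (show x/4 ∈ Icc (-(Real.pi/2)) (Real.pi/2) by constructor <;> linarith)
        (show x*r/2 ∈ Icc (-(Real.pi/2)) (Real.pi/2) by constructor <;> nlinarith)).mp hsin
      exact this
    nlinarith
  · -- upper bound
    have hinv0 : 0 < (Real.sqrt 2)⁻¹ := by positivity
    have hinv1 : (Real.sqrt 2)⁻¹ < 1 := by
      rw [inv_lt_one_iff₀]; right; exact h21
    have hstar := sin_star hinv0 hinv1 (show 0 < x/2 by linarith) (by linarith)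
    have hsr2 : Real.sin (x*r/2) = (Real.sqrt 2)⁻¹ * Real.sin (x/2) := by
      field_simp at e ⊢; linarith
    have hsin : Real.sin (x*r/2) < Real.sin ((Real.sqrt 2)⁻¹ * (x/2)) := by
      rw [hsr2]; exact hstar
    have harg : x*r/2 < (Real.sqrt 2)⁻¹ * (x/2) := by
      have := (Real.strictMonoOn_sin.lt_iff_lt
        (show x*r/2 ∈ Icc (-(Real.pi/2)) (Real.pi/2) by constructor <;> nlinarith)
        (show (Real.sqrt 2)⁻¹ * (x/2) ∈ Icc (-(Real.pi/2)) (Real.pi/2) by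
          constructor <;> nlinarith)).mp hsin
      exact this
    rw [one_div]
    nlinarith

/-- For each `x ∈ (0,π)`: `t ↦ Î(x,t)` is continuous and strictly decreasing on `(0,1)` with
limits `+∞` at `0⁺` and `−∞` at `1⁻`; it has a unique root `r_x ∈ (0,1)`; the root is
decreasing in `x`; and `1/2 < r_x < 1/√2`. -/
theorem stmt_5 :
    (∀ x ∈ Ioo 0 Real.pi,
      ContinuousOn (Ihat x) (Ioo 0 1) ∧ StrictAntiOn (Ihat x) (Ioo 0 1) ∧
      Tendsto (Ihat x) (nhdsWithin 0 (Ioi 0)) atTop ∧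
      Tendsto (Ihat x) (nhdsWithin 1 (Iio 1)) atBot) ∧
    (∀ x ∈ Ioo 0 Real.pi, ∃! r, r ∈ Ioo (0:ℝ) 1 ∧ Ihat x r = 0) ∧
    (∀ x₁ ∈ Ioo 0 Real.pi, ∀ x₂ ∈ Ioo 0 Real.pi, x₁ ≤ x₂ →
      ∀ r₁ ∈ Ioo (0:ℝ) 1, ∀ r₂ ∈ Ioo (0:ℝ) 1,
        Ihat x₁ r₁ = 0 → Ihat x₂ r₂ = 0 → r₂ ≤ r₁) ∧
    (∀ x ∈ Ioo 0 Real.pi, ∀ r ∈ Ioo (0:ℝ) 1, Ihat x r = 0 →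
      1/2 < r ∧ r < 1 / Real.sqrt 2) := by
  refine ⟨fun x hx => ⟨Ihat_cont hx, Ihat_anti hx, Ihat_tendsto_zero hx, Ihat_tendsto_one hx⟩,
    fun x hx => Ihat_exu hx,
    fun x₁ hx₁ x₂ hx₂ h12 r₁ hr₁ r₂ hr₂ h1 h2 => Ihat_root_mono hx₁ hx₂ h12 hr₁ hr₂ h1 h2,
    fun x hx r hr h => Ihat_root_bounds hx hr h⟩
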